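/- Let U : (ℂ[z])² → M₂(ℂ) be a vector of functionals (left M₂(ℂ)-linear in the sense U(A·Q) = A·U(Q)) satisfying the orthogonality conditions U(z^j B_m) = 0 for 0 ≤ j ≤ m−1 and the vector recurrence C_n B_{n-1} + (B_{n+1} − zI₂) B_n + A B_{n+1} = 0. Then U(z^m B_m) = C_m U(z^{m-1} B_{m-1}) for all m ≥ 1; consequently, if U(B_0) = C_0, then U(z^m B_m) = C_m C_{m-1} ⋯ C_0. -/

import Mathlib

open Polynomial Matrix

noncomputable section

/-- Auxiliary shifted sequence: `Paux (n+2) = P_n`. -/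
def Paux (a b c : ℕ → ℂ) : ℕ → Polynomial ℂ
  | 0 => 0
  | 1 => 0
  | 2 => 1
  | n + 3 =>
      (X - C (a (n + 1))) * Paux a b c (n + 2)
        - C (b n) * Paux a b c (n + 1) - C (c (n - 1)) * Paux a b c n

/-- The polynomials `P_n` of the four-term recurrence. -/
def Pp (a b c : ℕ → ℂ) (n : ℕ) : Polynomial ℂ := Paux a b c (n + 2)

/-- The vector polynomials `B_m = (P_{2m}, P_{2m+1})ᵀ`. -/
def Bv (a b c : ℕ → ℂ) (m : ℕ) : Fin 2 → Polynomial ℂ :=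
  ![Pp a b c (2 * m), Pp a b c (2 * m + 1)]

/-- The block `C_n = [[c_{2n-1}, b_{2n}],[0, c_{2n}]]` for `n ≥ 1`, with
`C_0 = [[1,0],[−a_1,1]]`. -/
def Cblk (a b c : ℕ → ℂ) (n : ℕ) : Matrix (Fin 2) (Fin 2) ℂ :=
  if n = 0 then !![1, 0; -(a 1), 1]
  else !![c (2 * n - 1), b (2 * n); 0, c (2 * n)]

/-- The product `C_m C_{m-1} ⋯ C_0`. -/
def Cprod (a b c : ℕ → ℂ) : ℕ → Matrix (Fin 2) (Fin 2) ℂ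
  | 0 => Cblk a b c 0
  | m + 1 => Cblk a b c (m + 1) * Cprod a b c m

/-- The vector three-term recurrence: `z B_{k+1} = A B_{k+2} + B' B_{k+1} + C_{k+1} B_k`. -/
lemma Bv_rec (a b c : ℕ → ℂ) (k : ℕ) :
    (fun i => X * Bv a b c (k+1) i) =
      ((!![0,0;(1:ℂ),0]).map C *ᵥ Bv a b c (k+2))
      + ((!![a (2*k+3), 1; b (2*k+3), a (2*k+4)]).map C *ᵥ Bv a b c (k+1))
      + ((Cblk a b c (k+1)).map C *ᵥ Bv a b c k) := by
  funext i
  fin_cases i <;>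
    simp [Bv, Pp, Cblk, mulVec, dotProduct, Fin.sum_univ_two, Nat.mul_succ,
      show 2*(k+1) = 2*k+2 from by ring, show 2*(k+2) = 2*k+4 from by ring,
      show 2*k+2+1 = 2*k+3 from rfl, Paux] <;> ring

/-- Polynomial multiplication commutes with `mulVec` by a scalar matrix. -/
lemma mul_mulVec_comm (p : Polynomial ℂ) (M : Matrix (Fin 2) (Fin 2) ℂ)
    (Q : Fin 2 → Polynomial ℂ) :
    (fun i => p * (M.map C *ᵥ Q) i) = M.map C *ᵥ (fun i => p * Q i) := by
  funext i
  simp only [mulVec, dotProduct, Fin.sum_univ_two, Matrix.map_apply]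
  ring

/-- If `U` is left `M₂(ℂ)`-linear and satisfies the orthogonality conditions
`U(z^j B_m) = 0` for `j < m`, then `U(z^m B_m) = C_m U(z^{m-1} B_{m-1})` for `m ≥ 1`;
consequently, if `U(B₀) = C₀`, then `U(z^m B_m) = C_m C_{m-1} ⋯ C₀`. -/
theorem moment_chain (a b c : ℕ → ℂ) (hb0 : b 0 = 0) (hc0 : c 0 = 0)
    (U : (Fin 2 → Polynomial ℂ) →ₗ[ℂ] Matrix (Fin 2) (Fin 2) ℂ)
    (hM2 : ∀ (A : Matrix (Fin 2) (Fin 2) ℂ) (Q : Fin 2 → Polynomial ℂ),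
      U (A.map C *ᵥ Q) = A * U Q)
    (horth : ∀ m j : ℕ, j < m → U (fun i => X ^ j * Bv a b c m i) = 0) :
    (∀ m : ℕ, 1 ≤ m →
      U (fun i => X ^ m * Bv a b c m i) =
        Cblk a b c m * U (fun i => X ^ (m - 1) * Bv a b c (m - 1) i)) ∧
    (U (Bv a b c 0) = Cblk a b c 0 →
      ∀ m : ℕ, U (fun i => X ^ m * Bv a b c m i) = Cprod a b c m) := by
  have key : ∀ k : ℕ,
      U (fun i => X ^ (k+1) * Bv a b c (k+1) i) =
        Cblk a b c (k+1) * U (fun i => X ^ k * Bv a b c k i) := by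
    intro k
    have h1 : (fun i => X ^ (k+1) * Bv a b c (k+1) i)
        = (fun i => X ^ k * ((fun i => X * Bv a b c (k+1) i) i)) := by
      funext i; rw [pow_succ]; ring
    rw [h1, Bv_rec]
    have h2 : (fun i => X ^ k *
          (((!![0,0;(1:ℂ),0]).map C *ᵥ Bv a b c (k+2))
          + ((!![a (2*k+3), 1; b (2*k+3), a (2*k+4)]).map C *ᵥ Bv a b c (k+1))
          + ((Cblk a b c (k+1)).map C *ᵥ Bv a b c k)) i)
        = (fun i => X ^ k * ((!![0,0;(1:ℂ),0]).map C *ᵥ Bv a b c (k+2)) i)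
          + (fun i => X ^ k * ((!![a (2*k+3), 1; b (2*k+3), a (2*k+4)]).map C *ᵥ Bv a b c (k+1)) i)
          + (fun i => X ^ k * ((Cblk a b c (k+1)).map C *ᵥ Bv a b c k) i) := by
      funext i; simp only [Pi.add_apply]; ring
    rw [h2, map_add, map_add, mul_mulVec_comm, mul_mulVec_comm, mul_mulVec_comm,
      hM2, hM2, hM2, horth (k+2) k (by omega), horth (k+1) k (by omega)]
    simp
  constructor
  · intro m hm
    obtain ⟨k, rfl⟩ : ∃ k, m = k + 1 := ⟨m - 1, by omega⟩
    simpa using key k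
  · intro h0 m
    induction m with
    | zero =>
        have : (fun i => X ^ 0 * Bv a b c 0 i) = Bv a b c 0 := by
          funext i; simp
        rw [this, h0]; rfl
    | succ k ih => rw [key k, ih]; rfl
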